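/- arXiv:2410.21224 — 2 statements merged into one kernel-verified Lean document; each statement's English description precedes it below -/
import Mathlib

section
/- For a prime p, s ≥ 1, and Witt vectors a, b of length s over a ℤ_(p)[ζ_{p^s}]-algebra, the deformed Artin-Hasse exponential satisfies E_{s,p}(a)·E_{s,p}(b) = E_{s,p}(a + b), where a + b denotes Witt vector addition. -/
open PowerSeries Classical

/-- Formal exponential `exp f = Σ_n f^n / n!` of a one-variable power series. -/
noncomputable def pexp {K : Type} [Field K] (f : PowerSeries K) : PowerSeries K :=
  PowerSeries.mk fun d =>
    ∑ n ∈ Finset.range (d + 1), PowerSeries.coeff d (f ^ n) / (Nat.factorial n : K)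

/-- Substitution `f(a)` of a multivariate power series `a` (with zero constant term) into a
one-variable power series `f`. -/
noncomputable def substOne {K : Type} [Field K] {σ : Type}
    (a : MvPowerSeries σ K) (f : PowerSeries K) : MvPowerSeries σ K :=
  fun d => ∑ n ∈ Finset.range (d.sum (fun _ k => k) + 1),
    PowerSeries.coeff n f * MvPowerSeries.coeff d (a ^ n)

/-- The one-variable series `E_{j,p}(t) = exp (Σ_{i<j} (ζ_{p^{j-i}} - 1) t^{p^i}/p^i)`,
where the compatible roots of unity are `ζ_{p^r} = ζ^{p^{s-r}}` for a fixed primitive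
`p^s`-th root of unity `ζ`. -/
noncomputable def Esingle (p s : ℕ) {K : Type} [Field K] (ζ : K) (j : ℕ) :
    PowerSeries K :=
  pexp (∑ i ∈ Finset.range j,
    (PowerSeries.monomial (p ^ i)) ((ζ ^ p ^ (s - j + i) - 1) / ((p : K) ^ i)))

/-- The deformed Artin–Hasse exponential on (the first `n` components of) a Witt vector:
`E_{n,p}(a) = Π_{i<n} E_{n-i,p}(a_i)`. -/
noncomputable def EW (p s : ℕ) {K : Type} [Field K] (ζ : K) {σ : Type} (n : ℕ)
    (a : WittVector p (MvPowerSeries σ K)) [Fact p.Prime] : MvPowerSeries σ K :=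
  ∏ i ∈ Finset.range n, substOne (a.coeff i) (Esingle p s ζ (n - i))

namespace AH

variable {K : Type} [Field K] {σ : Type}
def dS (d : σ →₀ ℕ) : ℕ := d.sum fun _ k => k

lemma dS_add (u v : σ →₀ ℕ) : dS (u + v) = dS u + dS v :=
  Finsupp.sum_add_index' (fun _ => rfl) (fun _ _ _ => rfl)

lemma dS_eq_zero {v : σ →₀ ℕ} (h : dS v = 0) : v = 0 := by
  ext x
  by_cases hx : x ∈ v.support
  · have := Finset.sum_eq_zero_iff.mp h x hx
    simpa using this
  · simpa using Finsupp.notMem_support_iff.mp hx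

/-- vanishing of low coefficients of powers -/
lemma coeff_pow_eq_zero {a : MvPowerSeries σ K} (ha : MvPowerSeries.constantCoeff a = 0) :
    ∀ (n : ℕ) (d : σ →₀ ℕ), dS d < n → MvPowerSeries.coeff d (a ^ n) = 0 := by
  intro n
  induction n with
  | zero => intro d hd; exact absurd hd (Nat.not_lt_zero _)
  | succ n ih =>
    intro d hd
    rw [pow_succ, MvPowerSeries.coeff_mul]
    apply Finset.sum_eq_zero
    intro p hp
    rw [Finset.HasAntidiagonal.mem_antidiagonal] at hp
    by_cases h1 : dS p.1 < n
    · rw [ih p.1 h1, zero_mul]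
    · have hsum : dS p.1 + dS p.2 = dS d := by rw [← dS_add, hp]
      have : dS p.2 = 0 := by omega
      rw [dS_eq_zero this, ← MvPowerSeries.coeff_zero_eq_constantCoeff_apply, ha] at *
      rw [mul_zero]

lemma coeff_mul_pow_eq_zero {a b : MvPowerSeries σ K}
    (ha : MvPowerSeries.constantCoeff a = 0) (hb : MvPowerSeries.constantCoeff b = 0)
    {m n : ℕ} {d : σ →₀ ℕ} (h : dS d < m + n) :
    MvPowerSeries.coeff d (a ^ m * b ^ n) = 0 := by
  rw [MvPowerSeries.coeff_mul]
  apply Finset.sum_eq_zero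
  intro p hp
  rw [Finset.HasAntidiagonal.mem_antidiagonal] at hp
  have hsum : dS p.1 + dS p.2 = dS d := by rw [← dS_add, hp]
  by_cases h1 : dS p.1 < m
  · rw [coeff_pow_eq_zero ha m p.1 h1, zero_mul]
  · have : dS p.2 < n := by omega
    rw [coeff_pow_eq_zero hb n p.2 this, mul_zero]

/-- one-variable version -/
lemma pcoeff_pow_eq_zero {f : PowerSeries K} (hf : PowerSeries.constantCoeff f = 0) :
    ∀ (m n : ℕ), n < m → PowerSeries.coeff n (f ^ m) = 0 := by
  intro m
  induction m with
  | zero => intro n hn; exact absurd hn (Nat.not_lt_zero _)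
  | succ m ih =>
    intro n hn
    rw [pow_succ, PowerSeries.coeff_mul]
    apply Finset.sum_eq_zero
    intro p hp
    rw [Finset.HasAntidiagonal.mem_antidiagonal] at hp
    by_cases h1 : p.1 < m
    · rw [ih p.1 h1, zero_mul]
    · have : p.2 = 0 := by omega
      rw [this, PowerSeries.coeff_zero_eq_constantCoeff, hf, mul_zero]

lemma biUnion_antidiagonal (N : ℕ) :
    (Finset.range (N + 1)).biUnion (fun k => Finset.HasAntidiagonal.antidiagonal k) =
      (Finset.range (N + 1) ×ˢ Finset.range (N + 1)).filter (fun p => p.1 + p.2 ≤ N) := by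
  ext ⟨i, j⟩
  simp only [Finset.mem_biUnion, Finset.mem_range, Finset.HasAntidiagonal.mem_antidiagonal,
    Finset.mem_filter, Finset.mem_product]
  constructor
  · rintro ⟨k, hk, rfl⟩; omega
  · rintro ⟨⟨hi, hj⟩, hij⟩; exact ⟨i + j, by omega, rfl⟩

/-- square = union of antidiagonals, for functions vanishing above the antidiagonal N -/
lemma sum_antidiagonal_eq_sum_square {M : Type*} [AddCommMonoid M] {N : ℕ} {F : ℕ → ℕ → M}
    (hF : ∀ i j, N < i + j → F i j = 0) :
    ∑ k ∈ Finset.range (N + 1), ∑ p ∈ Finset.HasAntidiagonal.antidiagonal k, F p.1 p.2 =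
      ∑ m ∈ Finset.range (N + 1), ∑ n ∈ Finset.range (N + 1), F m n := by
  rw [← Finset.sum_biUnion]
  · rw [biUnion_antidiagonal, Finset.sum_filter, ← Finset.sum_product']
    apply Finset.sum_congr rfl
    intro p _
    by_cases h : p.1 + p.2 ≤ N
    · simp [h]
    · simp only [h, if_false]
      exact (hF p.1 p.2 (by omega)).symm
  · intro x hx y hy hxy
    simp only [Finset.coe_range, Set.mem_Iio] at hx hy
    apply Finset.disjoint_left.mpr
    intro p hp hp'
    rw [Finset.HasAntidiagonal.mem_antidiagonal] at hp hp'
    exact hxy (by omega)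

/-- triangle = square, for functions vanishing below the diagonal -/
lemma sum_triangle_eq_sum_square {M : Type*} [AddCommMonoid M] {N : ℕ} {F : ℕ → ℕ → M}
    (hF : ∀ m n, n < m → F m n = 0) :
    ∑ n ∈ Finset.range (N + 1), ∑ m ∈ Finset.range (n + 1), F m n =
      ∑ m ∈ Finset.range (N + 1), ∑ n ∈ Finset.range (N + 1), F m n := by
  rw [Finset.sum_comm]
  apply Finset.sum_congr rfl
  intro n hn
  rw [Finset.mem_range] at hn
  rw [Finset.range_eq_Ico, Finset.range_eq_Ico,
    ← Finset.sum_Ico_consecutive _ (Nat.zero_le (n + 1)) (by omega : n + 1 ≤ N + 1)]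
  have : ∑ m ∈ Finset.Ico (n + 1) (N + 1), F m n = 0 := by
    apply Finset.sum_eq_zero
    intro m hm
    rw [Finset.mem_Ico] at hm
    exact hF m n (by omega)
  rw [this, add_zero]

/-- The truncated evaluation `∑_{n ≤ N} C (c n) a^n`. -/
noncomputable def S (a : MvPowerSeries σ K) (c : ℕ → K) (N : ℕ) : MvPowerSeries σ K :=
  ∑ n ∈ Finset.range (N + 1), MvPowerSeries.C (c n) * a ^ n

lemma coeff_S (a : MvPowerSeries σ K) (c : ℕ → K) (N : ℕ) (d : σ →₀ ℕ) :
    MvPowerSeries.coeff d (S a c N) =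
      ∑ n ∈ Finset.range (N + 1), c n * MvPowerSeries.coeff d (a ^ n) := by
  rw [S, map_sum]
  exact Finset.sum_congr rfl fun n _ => MvPowerSeries.coeff_C_mul _ _ _

lemma coeff_substOne (a : MvPowerSeries σ K) (f : PowerSeries K) (d : σ →₀ ℕ) :
    MvPowerSeries.coeff d (substOne a f) =
      ∑ n ∈ Finset.range (dS d + 1),
        PowerSeries.coeff n f * MvPowerSeries.coeff d (a ^ n) := rfl

/-- substOne agrees with any sufficiently long truncated evaluation. -/
lemma coeff_substOne_eq_coeff_S {a : MvPowerSeries σ K}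
    (ha : MvPowerSeries.constantCoeff a = 0) (f : PowerSeries K) {d : σ →₀ ℕ} {N : ℕ}
    (hN : dS d ≤ N) :
    MvPowerSeries.coeff d (substOne a f) =
      MvPowerSeries.coeff d (S a (fun n => PowerSeries.coeff n f) N) := by
  rw [coeff_substOne, coeff_S]
  apply Finset.sum_subset
  · intro x hx; rw [Finset.mem_range] at *; omega
  · intro x _ hx
    rw [Finset.mem_range, not_lt] at hx
    rw [coeff_pow_eq_zero ha x d (by omega), mul_zero]


/-- Formal exponential of a multivariate power series with zero constant term. -/
noncomputable def mexp (g : MvPowerSeries σ K) : MvPowerSeries σ K :=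
  fun d => ∑ n ∈ Finset.range (dS d + 1),
    ((Nat.factorial n : K))⁻¹ * MvPowerSeries.coeff d (g ^ n)

lemma coeff_mexp (g : MvPowerSeries σ K) (d : σ →₀ ℕ) :
    MvPowerSeries.coeff d (mexp g) =
      ∑ n ∈ Finset.range (dS d + 1),
        ((Nat.factorial n : K))⁻¹ * MvPowerSeries.coeff d (g ^ n) := rfl

lemma coeff_mexp_eq_coeff_S {g : MvPowerSeries σ K}
    (hg : MvPowerSeries.constantCoeff g = 0) {d : σ →₀ ℕ} {N : ℕ} (hN : dS d ≤ N) :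
    MvPowerSeries.coeff d (mexp g) =
      MvPowerSeries.coeff d (S g (fun n => ((Nat.factorial n : K))⁻¹) N) := by
  rw [coeff_mexp, coeff_S]
  apply Finset.sum_subset
  · intro x hx; rw [Finset.mem_range] at *; omega
  · intro x _ hx
    rw [Finset.mem_range, not_lt] at hx
    rw [coeff_pow_eq_zero hg x d (by omega), mul_zero]

lemma coeff_mul_congr {x y X Y : MvPowerSeries σ K} {d : σ →₀ ℕ}
    (h1 : ∀ u : σ →₀ ℕ, dS u ≤ dS d → MvPowerSeries.coeff u x = MvPowerSeries.coeff u X)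
    (h2 : ∀ u : σ →₀ ℕ, dS u ≤ dS d → MvPowerSeries.coeff u y = MvPowerSeries.coeff u Y) :
    MvPowerSeries.coeff d (x * y) = MvPowerSeries.coeff d (X * Y) := by
  rw [MvPowerSeries.coeff_mul, MvPowerSeries.coeff_mul]
  apply Finset.sum_congr rfl
  intro p hp
  rw [Finset.HasAntidiagonal.mem_antidiagonal] at hp
  have hd : dS p.1 + dS p.2 = dS d := by rw [← dS_add, hp]
  rw [h1 p.1 (by omega), h2 p.2 (by omega)]

lemma substOne_one {a : MvPowerSeries σ K} (ha : MvPowerSeries.constantCoeff a = 0) :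
    substOne a 1 = 1 := by
  ext d
  rw [coeff_substOne]
  rw [Finset.sum_eq_single 0]
  · simp
  · intro n hn hn0
    rw [PowerSeries.coeff_one, if_neg hn0, zero_mul]
  · intro h; simp at h

lemma substOne_mul {a : MvPowerSeries σ K} (ha : MvPowerSeries.constantCoeff a = 0)
    (f g : PowerSeries K) : substOne a (f * g) = substOne a f * substOne a g := by
  ext d
  set N := dS d with hNdef
  -- RHS
  have hR : MvPowerSeries.coeff d (substOne a f * substOne a g) =
      MvPowerSeries.coeff d
        (S a (fun n => PowerSeries.coeff n f) N * S a (fun n => PowerSeries.coeff n g) N) :=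
    coeff_mul_congr (fun u hu => coeff_substOne_eq_coeff_S ha f hu)
      (fun u hu => coeff_substOne_eq_coeff_S ha g hu)
  rw [hR]
  -- expand product of truncations
  rw [S, S, Finset.sum_mul_sum]
  have hprod : ∀ m n : ℕ,
      (MvPowerSeries.C (PowerSeries.coeff m f) * a ^ m) *
        (MvPowerSeries.C (PowerSeries.coeff n g) * a ^ n) =
      MvPowerSeries.C (PowerSeries.coeff m f * PowerSeries.coeff n g) * a ^ (m + n) := by
    intro m n
    rw [map_mul, pow_add]; ring
  -- LHS
  rw [coeff_substOne]
  have hL : ∑ n ∈ Finset.range (dS d + 1),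
        PowerSeries.coeff n (f * g) * MvPowerSeries.coeff d (a ^ n) =
      ∑ k ∈ Finset.range (N + 1), ∑ p ∈ Finset.HasAntidiagonal.antidiagonal k,
        (PowerSeries.coeff p.1 f * PowerSeries.coeff p.2 g) *
          MvPowerSeries.coeff d (a ^ (p.1 + p.2)) := by
    apply Finset.sum_congr rfl
    intro k _
    rw [PowerSeries.coeff_mul, Finset.sum_mul]
    apply Finset.sum_congr rfl
    intro p hp
    rw [Finset.HasAntidiagonal.mem_antidiagonal] at hp
    rw [hp]
  rw [hL, sum_antidiagonal_eq_sum_square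
    (F := fun m n => (PowerSeries.coeff m f * PowerSeries.coeff n g) *
      MvPowerSeries.coeff d (a ^ (m + n)))
    (fun i j hij => by
      rw [coeff_pow_eq_zero ha (i + j) d (by omega), mul_zero])]
  rw [map_sum]
  apply Finset.sum_congr rfl
  intro m _
  rw [map_sum]
  apply Finset.sum_congr rfl
  intro n _
  rw [hprod m n, MvPowerSeries.coeff_C_mul]


lemma substOne_pow {a : MvPowerSeries σ K} (ha : MvPowerSeries.constantCoeff a = 0)
    (f : PowerSeries K) (m : ℕ) : substOne a (f ^ m) = (substOne a f) ^ m := by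
  induction m with
  | zero => simpa using substOne_one ha
  | succ m ih => rw [pow_succ, pow_succ, substOne_mul ha, ih]

lemma factorial_cast_inv_choose {K : Type} [Field K] [CharZero K] {m k : ℕ} (hm : m ≤ k) :
    ((Nat.factorial k : K))⁻¹ * (Nat.choose k m : K) =
      ((Nat.factorial m : K))⁻¹ * ((Nat.factorial (k - m) : K))⁻¹ := by
  have h : ((Nat.choose k m * Nat.factorial m * Nat.factorial (k - m) : ℕ) : K)
      = ((Nat.factorial k : ℕ) : K) := by
    exact_mod_cast congrArg (fun n : ℕ => (n : K)) (Nat.choose_mul_factorial_mul_factorial hm)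
  push_cast at h
  have h1 : ((Nat.factorial k : K)) ≠ 0 := Nat.cast_ne_zero.mpr (Nat.factorial_ne_zero k)
  have h2 : ((Nat.factorial m : K)) ≠ 0 := Nat.cast_ne_zero.mpr (Nat.factorial_ne_zero m)
  have h3 : ((Nat.factorial (k - m) : K)) ≠ 0 := Nat.cast_ne_zero.mpr (Nat.factorial_ne_zero _)
  field_simp
  linear_combination h

lemma substOne_pexp [CharZero K] {a : MvPowerSeries σ K}
    (ha : MvPowerSeries.constantCoeff a = 0) {f : PowerSeries K}
    (hf : PowerSeries.constantCoeff f = 0) :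
    substOne a (pexp f) = mexp (substOne a f) := by
  ext d
  set N := dS d with hNdef
  have hL : MvPowerSeries.coeff d (substOne a (pexp f)) =
      ∑ n ∈ Finset.range (N + 1), ∑ m ∈ Finset.range (n + 1),
        (PowerSeries.coeff n (f ^ m) / (Nat.factorial m : K)) *
          MvPowerSeries.coeff d (a ^ n) := by
    rw [coeff_substOne]
    apply Finset.sum_congr rfl
    intro n _
    rw [pexp, PowerSeries.coeff_mk, Finset.sum_mul]
  rw [hL, sum_triangle_eq_sum_square
      (F := fun m n => (PowerSeries.coeff n (f ^ m) / (Nat.factorial m : K)) *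
        MvPowerSeries.coeff d (a ^ n))
      (fun m n hnm => by
        rw [pcoeff_pow_eq_zero hf m n hnm, zero_div, zero_mul])]
  rw [coeff_mexp]
  apply Finset.sum_congr rfl
  intro m _
  rw [← substOne_pow ha, coeff_substOne_eq_coeff_S ha _ (le_refl N), coeff_S,
    Finset.mul_sum]
  apply Finset.sum_congr rfl
  intro n _
  ring

lemma mexp_add [CharZero K] {g h : MvPowerSeries σ K}
    (hg : MvPowerSeries.constantCoeff g = 0)
    (hh : MvPowerSeries.constantCoeff h = 0) :
    mexp (g + h) = mexp g * mexp h := by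
  ext d
  set N := dS d with hNdef
  have hR : MvPowerSeries.coeff d (mexp g * mexp h) =
      MvPowerSeries.coeff d (S g (fun n => ((Nat.factorial n : K))⁻¹) N *
        S h (fun n => ((Nat.factorial n : K))⁻¹) N) :=
    coeff_mul_congr (fun u hu => coeff_mexp_eq_coeff_S hg hu)
      (fun u hu => coeff_mexp_eq_coeff_S hh hu)
  rw [hR, S, S, Finset.sum_mul_sum]
  have hsum : MvPowerSeries.constantCoeff (g + h) = 0 := by
    rw [map_add, hg, hh, add_zero]
  rw [coeff_mexp]
  have hL : ∑ n ∈ Finset.range (dS d + 1),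
        ((Nat.factorial n : K))⁻¹ * MvPowerSeries.coeff d ((g + h) ^ n) =
      ∑ k ∈ Finset.range (N + 1), ∑ p ∈ Finset.HasAntidiagonal.antidiagonal k,
        (((Nat.factorial p.1 : K))⁻¹ * ((Nat.factorial p.2 : K))⁻¹) *
          MvPowerSeries.coeff d (g ^ p.1 * h ^ p.2) := by
    apply Finset.sum_congr rfl
    intro k _
    rw [add_pow, map_sum, Finset.mul_sum,
      Finset.Nat.sum_antidiagonal_eq_sum_range_succ_mk]
    apply Finset.sum_congr rfl
    intro m hm
    rw [Finset.mem_range] at hm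
    have hm' : m ≤ k := by omega
    simp only
    have hc : MvPowerSeries.coeff d
          (g ^ m * h ^ (k - m) * ((k.choose m : ℕ) : MvPowerSeries σ K))
        = (k.choose m : K) * MvPowerSeries.coeff d (g ^ m * h ^ (k - m)) := by
      rw [← map_natCast (MvPowerSeries.C) (k.choose m), mul_comm,
        MvPowerSeries.coeff_C_mul]
    rw [hc, ← mul_assoc, factorial_cast_inv_choose hm']
  rw [hL, sum_antidiagonal_eq_sum_square
      (F := fun m n => (((Nat.factorial m : K))⁻¹ * ((Nat.factorial n : K))⁻¹) *
        MvPowerSeries.coeff d (g ^ m * h ^ n))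
      (fun i j hij => by
        rw [coeff_mul_pow_eq_zero hg hh (by omega), mul_zero])]
  rw [map_sum]
  apply Finset.sum_congr rfl
  intro m _
  rw [map_sum]
  apply Finset.sum_congr rfl
  intro n _
  have : (MvPowerSeries.C ((Nat.factorial m : K))⁻¹ * g ^ m) *
      (MvPowerSeries.C ((Nat.factorial n : K))⁻¹ * h ^ n) =
      MvPowerSeries.C (((Nat.factorial m : K))⁻¹ * ((Nat.factorial n : K))⁻¹) *
        (g ^ m * h ^ n) := by
    rw [map_mul]; ring
  rw [this, MvPowerSeries.coeff_C_mul]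

lemma mexp_zero : mexp (0 : MvPowerSeries σ K) = 1 := by
  ext d
  rw [coeff_mexp, Finset.sum_eq_single 0]
  · simp
  · intro n hn hn0
    rw [zero_pow hn0, map_zero, mul_zero]
  · intro h; simp at h

lemma prod_mexp [CharZero K] {ι : Type*} (t : Finset ι) (g : ι → MvPowerSeries σ K)
    (hg : ∀ i, MvPowerSeries.constantCoeff (g i) = 0) :
    ∏ i ∈ t, mexp (g i) = mexp (∑ i ∈ t, g i) := by
  induction t using Finset.cons_induction with
  | empty => simpa using mexp_zero.symm
  | cons i t hi ih =>
    rw [Finset.prod_cons, Finset.sum_cons, ih, ← mexp_add (hg i)]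
    rw [map_sum]
    exact Finset.sum_eq_zero fun j _ => hg j


lemma substOne_monomial {a : MvPowerSeries σ K}
    (ha : MvPowerSeries.constantCoeff a = 0) (n : ℕ) (c : K) :
    substOne a (PowerSeries.monomial n c) = MvPowerSeries.C c * a ^ n := by
  ext d
  rw [coeff_substOne, MvPowerSeries.coeff_C_mul]
  by_cases hn : n ≤ dS d
  · rw [Finset.sum_eq_single n]
    · rw [PowerSeries.coeff_monomial, if_pos rfl]
    · intro m _ hm; rw [PowerSeries.coeff_monomial, if_neg hm, zero_mul]
    · intro h; rw [Finset.mem_range] at h; omega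
  · rw [coeff_pow_eq_zero ha n d (by omega), mul_zero]
    apply Finset.sum_eq_zero
    intro m hm
    rw [Finset.mem_range] at hm
    rw [PowerSeries.coeff_monomial, if_neg (by omega), zero_mul]

lemma substOne_sum {a : MvPowerSeries σ K} {ι : Type*} (t : Finset ι)
    (f : ι → PowerSeries K) :
    substOne a (∑ i ∈ t, f i) = ∑ i ∈ t, substOne a (f i) := by
  ext d
  rw [coeff_substOne, map_sum]
  have : ∀ i ∈ t, MvPowerSeries.coeff d (substOne a (f i)) =
      ∑ n ∈ Finset.range (dS d + 1),
        PowerSeries.coeff n (f i) * MvPowerSeries.coeff d (a ^ n) :=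
    fun i _ => coeff_substOne a (f i) d
  rw [Finset.sum_congr rfl this, Finset.sum_comm]
  apply Finset.sum_congr rfl
  intro n _
  rw [map_sum, Finset.sum_mul]

section Witt

variable (p s : ℕ) [Fact p.Prime] (ζ : K)

/-- `L(a) = ∑_{m<s} (ζ^{p^m} - 1)/p^m · w_m(a)`. -/
noncomputable def Lser (a : WittVector p (MvPowerSeries σ K)) : MvPowerSeries σ K :=
  ∑ m ∈ Finset.range s,
    MvPowerSeries.C ((ζ ^ p ^ m - 1) / (p : K) ^ m) * (WittVector.ghostComponent m a)

lemma ghost_explicit (a : WittVector p (MvPowerSeries σ K)) (m : ℕ) :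
    (WittVector.ghostComponent m a : MvPowerSeries σ K) =
      ∑ i ∈ Finset.range (m + 1),
        (p : MvPowerSeries σ K) ^ i * (a.coeff i) ^ p ^ (m - i) := by
  rw [WittVector.ghostComponent_apply, aeval_wittPolynomial]

lemma p_pow_ne_zero (k : ℕ) : p ^ k ≠ 0 :=
  pow_ne_zero k (Fact.out (p := p.Prime)).ne_zero

lemma const_ghost (a : WittVector p (MvPowerSeries σ K))
    (ha : ∀ i, MvPowerSeries.constantCoeff (a.coeff i) = 0) (m : ℕ) :
    MvPowerSeries.constantCoeff (WittVector.ghostComponent m a) = 0 := by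
  rw [ghost_explicit, map_sum]
  apply Finset.sum_eq_zero
  intro i _
  rw [map_mul,
    show MvPowerSeries.constantCoeff ((a.coeff i) ^ p ^ (m - i)) = 0 by
      rw [map_pow, ha i, zero_pow (p_pow_ne_zero p _)],
    mul_zero]

lemma const_Lser (a : WittVector p (MvPowerSeries σ K))
    (ha : ∀ i, MvPowerSeries.constantCoeff (a.coeff i) = 0) :
    MvPowerSeries.constantCoeff (Lser p s ζ a) = 0 := by
  rw [Lser, map_sum]
  apply Finset.sum_eq_zero
  intro m _
  rw [map_mul, const_ghost p a ha m, mul_zero]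

lemma Lser_add (a b : WittVector p (MvPowerSeries σ K)) :
    Lser p s ζ (a + b) = Lser p s ζ a + Lser p s ζ b := by
  simp only [Lser, map_add, mul_add, Finset.sum_add_distrib]

end Witt


lemma EW_eq_mexp [CharZero K] (p s : ℕ) [Fact p.Prime] (ζ : K)
    (a : WittVector p (MvPowerSeries σ K))
    (ha : ∀ i, MvPowerSeries.constantCoeff (a.coeff i) = 0) :
    EW p s ζ s a = mexp (Lser p s ζ a) := by
  have hp0 : (p : K) ≠ 0 :=
    Nat.cast_ne_zero.mpr (Fact.out (p := p.Prime)).ne_zero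
  set g : ℕ → MvPowerSeries σ K := fun i =>
    ∑ k ∈ Finset.range (s - i),
      MvPowerSeries.C ((ζ ^ p ^ (i + k) - 1) / (p : K) ^ k) * (a.coeff i) ^ p ^ k with hg
  have hconstg : ∀ i, MvPowerSeries.constantCoeff (g i) = 0 := by
    intro i
    rw [hg]
    simp only
    rw [map_sum]
    apply Finset.sum_eq_zero
    intro k _
    rw [map_mul,
      show MvPowerSeries.constantCoeff ((a.coeff i) ^ p ^ k) = 0 by
        rw [map_pow, ha i, zero_pow (p_pow_ne_zero p _)],
      mul_zero]
  have h1 : ∀ i ∈ Finset.range s,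
      substOne (a.coeff i) (Esingle p s ζ (s - i)) = mexp (g i) := by
    intro i hi
    rw [Finset.mem_range] at hi
    rw [Esingle]
    have hF : PowerSeries.constantCoeff
        (∑ k ∈ Finset.range (s - i),
          (PowerSeries.monomial (p ^ k)) ((ζ ^ p ^ (s - (s - i) + k) - 1) / (p : K) ^ k))
        = 0 := by
      rw [map_sum]
      apply Finset.sum_eq_zero
      intro k _
      rw [← PowerSeries.coeff_zero_eq_constantCoeff_apply, PowerSeries.coeff_monomial,
        if_neg (fun h => p_pow_ne_zero p k h.symm)]
    rw [substOne_pexp (ha i) hF, substOne_sum]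
    refine congrArg mexp ?_
    apply Finset.sum_congr rfl
    intro k _
    rw [substOne_monomial (ha i), Nat.sub_sub_self (le_of_lt hi)]
  rw [EW, Finset.prod_congr rfl h1, prod_mexp _ _ hconstg]
  refine congrArg mexp ?_
  -- `∑ i g i = Lser`
  rw [Lser]
  have h2 : ∀ m ∈ Finset.range s,
      MvPowerSeries.C ((ζ ^ p ^ m - 1) / (p : K) ^ m) *
          (WittVector.ghostComponent m a : MvPowerSeries σ K) =
        ∑ i ∈ Finset.range (m + 1),
          MvPowerSeries.C ((ζ ^ p ^ m - 1) / (p : K) ^ m) *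
            ((p : MvPowerSeries σ K) ^ i * (a.coeff i) ^ p ^ (m - i)) := by
    intro m _
    rw [ghost_explicit, Finset.mul_sum]
  rw [Finset.sum_congr rfl h2]
  have h3 := Finset.sum_Ico_Ico_comm 0 s (fun i m =>
    MvPowerSeries.C ((ζ ^ p ^ m - 1) / (p : K) ^ m) *
      ((p : MvPowerSeries σ K) ^ i * (a.coeff i) ^ p ^ (m - i)))
  simp only [Finset.range_eq_Ico]
  rw [← h3]
  apply Finset.sum_congr rfl
  intro i hi
  rw [Finset.mem_Ico] at hi
  rw [Finset.sum_Ico_eq_sum_range]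
  rw [hg]
  simp only
  apply Finset.sum_congr rfl
  intro k _
  rw [Nat.add_sub_cancel_left]
  have hcast : (p : MvPowerSeries σ K) ^ i = MvPowerSeries.C ((p : K) ^ i) := by
    rw [map_pow, map_natCast]
  rw [hcast, ← mul_assoc, ← map_mul]
  congr 2
  rw [pow_add]
  field_simp
  ring

lemma EW_mul_EW [CharZero K] (p s : ℕ) [Fact p.Prime] (ζ : K)
    (a b : WittVector p (MvPowerSeries σ K))
    (hca : ∀ i, MvPowerSeries.constantCoeff (a.coeff i) = 0)
    (hcb : ∀ i, MvPowerSeries.constantCoeff (b.coeff i) = 0) :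
    EW p s ζ s a * EW p s ζ s b = EW p s ζ s (a + b) := by
  have hmapa : WittVector.map (MvPowerSeries.constantCoeff) a = 0 := by
    apply WittVector.ext; intro n
    rw [WittVector.map_coeff, hca n, WittVector.zero_coeff]
  have hmapb : WittVector.map (MvPowerSeries.constantCoeff) b = 0 := by
    apply WittVector.ext; intro n
    rw [WittVector.map_coeff, hcb n, WittVector.zero_coeff]
  have hcab : ∀ i, MvPowerSeries.constantCoeff ((a + b).coeff i) = 0 := by
    intro i
    have h := (WittVector.map_coeff (MvPowerSeries.constantCoeff) (a + b) i).symm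
    rw [h, map_add, hmapa, hmapb, add_zero, WittVector.zero_coeff]
  rw [EW_eq_mexp p s ζ a hca, EW_eq_mexp p s ζ b hcb, EW_eq_mexp p s ζ (a + b) hcab,
    ← mexp_add (const_Lser p s ζ a hca) (const_Lser p s ζ b hcb), Lser_add]

end AH

/-- For Witt vectors `a`, `b` of length `s` (with independent variable entries, so that the
identity is one of formal power series in the entries), the deformed Artin–Hasse
exponential satisfies `E_{s,p}(a) · E_{s,p}(b) = E_{s,p}(a + b)`, where `a + b` is Witt
vector addition. -/
theorem stmt_6 (p s : ℕ) [Fact p.Prime] (hs : 1 ≤ s) (K : Type) [Field K] [CharZero K]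
    (ζ : K) (hζ : IsPrimitiveRoot ζ (p ^ s)) :
    ∀ a b : WittVector p (MvPowerSeries (Fin 2 × ℕ) K),
      a = WittVector.mk p (fun i => MvPowerSeries.X (0, i)) →
      b = WittVector.mk p (fun i => MvPowerSeries.X (1, i)) →
      EW p s ζ s a * EW p s ζ s b = EW p s ζ s (a + b) := by
  intro a b hA hB
  apply AH.EW_mul_EW
  · intro i; rw [hA, WittVector.coeff_mk]; exact MvPowerSeries.constantCoeff_X _
  · intro i; rw [hB, WittVector.coeff_mk]; exact MvPowerSeries.constantCoeff_X _
end

section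
/- Define G_{s,p}(a) = E_{s,p}(p·a)/E_{s−1,p}(a) for Witt vectors a of length s (where p·a means multiplication by p in the Witt ring). Then G_{s,p}(a)·G_{s,p}(b) = G_{s,p}(a+b) for Witt vector addition. -/
open PowerSeries Classical

variable {K : Type} [Field K] {σ : Type}

/-- weight of a multidegree -/
def wt (d : σ →₀ ℕ) : ℕ := d.sum fun _ k => k

lemma wt_add (d e : σ →₀ ℕ) : wt (d + e) = wt d + wt e := by
  classical
  exact Finsupp.sum_add_index' (fun _ => rfl) (fun _ _ _ => rfl)

/-- vanishing: if constant coeff of a is 0, coeff d (a^n) = 0 when wt d < n -/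
lemma coeff_pow_eq_zero {a : MvPowerSeries σ K} (ha : MvPowerSeries.constantCoeff a = 0)
    {n : ℕ} : ∀ {d : σ →₀ ℕ}, wt d < n → MvPowerSeries.coeff d (a ^ n) = 0 := by
  classical
  induction n with
  | zero => intro d h; omega
  | succ n ih =>
    intro d h
    rw [pow_succ, MvPowerSeries.coeff_mul]
    apply Finset.sum_eq_zero
    rintro ⟨e, f⟩ hef
    rw [Finset.HasAntidiagonal.mem_antidiagonal] at hef
    by_cases hf : f = 0
    · subst hf
      have : MvPowerSeries.coeff (0 : σ →₀ ℕ) a = 0 := ha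
      rw [this, mul_zero]
    · have hwf : 1 ≤ wt f := by
        rcases Finsupp.ne_iff.mp hf with ⟨x, hx⟩
        simp only [Finsupp.coe_zero, Pi.zero_apply] at hx
        have : f x ≤ wt f := by
          apply Finset.single_le_sum (f := fun x => f x) (fun _ _ => Nat.zero_le _)
          exact Finsupp.mem_support_iff.mpr hx
        omega
      have : wt e < n := by
        have := wt_add e f
        rw [hef] at this
        omega
      rw [ih this, zero_mul]

/-- resummation over a square with vanishing above the antidiagonal -/
lemma sum_square_eq_sum_antidiagonal (M : ℕ) (h : ℕ → ℕ → K)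
    (hv : ∀ n m, M ≤ n + m → h n m = 0) :
    ∑ n ∈ Finset.range M, ∑ m ∈ Finset.range M, h n m
      = ∑ N ∈ Finset.range M, ∑ nm ∈ Finset.HasAntidiagonal.antidiagonal N, h nm.1 nm.2 := by
  classical
  rw [← Finset.sum_product']
  have hset : (Finset.range M ×ˢ Finset.range M).filter (fun p => p.1 + p.2 < M)
      = (Finset.range M).biUnion (fun N => Finset.HasAntidiagonal.antidiagonal N) := by
    ext ⟨n, m⟩
    simp only [Finset.mem_filter, Finset.mem_product, Finset.mem_range, Finset.mem_biUnion,
      Finset.HasAntidiagonal.mem_antidiagonal]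
    constructor
    · rintro ⟨⟨_, _⟩, h3⟩; exact ⟨n + m, h3, rfl⟩
    · rintro ⟨N, hN, rfl⟩; omega
  have hdisj : ∀ x ∈ Finset.range M, ∀ y ∈ Finset.range M, x ≠ y →
      Disjoint (Finset.HasAntidiagonal.antidiagonal x) (Finset.HasAntidiagonal.antidiagonal y) := by
    intro x _ y _ hxy
    rw [Finset.disjoint_left]
    rintro ⟨n, m⟩ h1 h2
    rw [Finset.HasAntidiagonal.mem_antidiagonal] at h1 h2
    exact hxy (h1 ▸ h2)
  rw [← Finset.sum_filter_of_ne (p := fun p => p.1 + p.2 < M)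
    (fun p _ hp => by by_contra hc; exact hp (hv p.1 p.2 (by omega))), hset,
    Finset.sum_biUnion hdisj]

/-- multivariate exponential -/
noncomputable def mexp (x : MvPowerSeries σ K) : MvPowerSeries σ K :=
  fun d => ∑ n ∈ Finset.range (wt d + 1),
    MvPowerSeries.coeff d (x ^ n) / (Nat.factorial n : K)

lemma coeff_mexp (x : MvPowerSeries σ K) (d : σ →₀ ℕ) :
    MvPowerSeries.coeff d (mexp x) = ∑ n ∈ Finset.range (wt d + 1),
      MvPowerSeries.coeff d (x ^ n) / (Nat.factorial n : K) := rfl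

lemma coeff_mexp_of_le {x : MvPowerSeries σ K} (hx : MvPowerSeries.constantCoeff x = 0)
    (d : σ →₀ ℕ) {N : ℕ} (hN : wt d < N) :
    MvPowerSeries.coeff d (mexp x) = ∑ n ∈ Finset.range N,
      MvPowerSeries.coeff d (x ^ n) / (Nat.factorial n : K) := by
  rw [coeff_mexp]
  apply Finset.sum_subset
  · intro n hn; rw [Finset.mem_range] at *; omega
  · intro n _ hn
    rw [Finset.mem_range, not_lt] at hn
    rw [coeff_pow_eq_zero hx (by omega), zero_div]

lemma mexp_zero : mexp (0 : MvPowerSeries σ K) = 1 := by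
  ext d
  rw [coeff_mexp]
  rw [Finset.sum_eq_single 0]
  · simp
  · intro n _ hn
    rw [zero_pow hn, map_zero, zero_div]
  · intro h; simp at h

lemma constantCoeff_mexp (x : MvPowerSeries σ K) :
    MvPowerSeries.constantCoeff (mexp x) = 1 := by
  have : MvPowerSeries.constantCoeff (mexp x) = MvPowerSeries.coeff 0 (mexp x) := rfl
  rw [this, coeff_mexp]
  have hwt : wt (0 : σ →₀ ℕ) = 0 := rfl
  rw [hwt]
  simp

lemma coeff_mul_pow_eq_zero {x y : MvPowerSeries σ K}
    (hx : MvPowerSeries.constantCoeff x = 0) (hy : MvPowerSeries.constantCoeff y = 0)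
    {n m : ℕ} {d : σ →₀ ℕ} (h : wt d < n + m) :
    MvPowerSeries.coeff d (x ^ n * y ^ m) = 0 := by
  classical
  rw [MvPowerSeries.coeff_mul]
  apply Finset.sum_eq_zero
  rintro ⟨e, f⟩ hef
  dsimp only at hef ⊢
  rw [Finset.HasAntidiagonal.mem_antidiagonal] at hef
  have hw : wt e + wt f = wt d := by rw [← wt_add, hef]
  by_cases he : wt e < n
  · rw [coeff_pow_eq_zero hx he, zero_mul]
  · rw [coeff_pow_eq_zero hy (show wt f < m by omega), mul_zero]

lemma choose_div_factorial [CharZero K] (N k : ℕ) (hk : k ≤ N) :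
    (N.choose k : K) / (Nat.factorial N : K)
      = 1 / ((Nat.factorial k : K) * (Nat.factorial (N - k) : K)) := by
  have key := Nat.choose_mul_factorial_mul_factorial hk
  have h1 : (Nat.factorial N : K) ≠ 0 := Nat.cast_ne_zero.mpr (Nat.factorial_ne_zero N)
  have h2 : (Nat.factorial k : K) ≠ 0 := Nat.cast_ne_zero.mpr (Nat.factorial_ne_zero k)
  have h3 : (Nat.factorial (N - k) : K) ≠ 0 := Nat.cast_ne_zero.mpr (Nat.factorial_ne_zero _)
  have key' : (N.choose k : K) * (Nat.factorial k : K) * (Nat.factorial (N - k) : K)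
      = (Nat.factorial N : K) := by exact_mod_cast congrArg (Nat.cast : ℕ → K) key
  rw [div_eq_div_iff h1 (mul_ne_zero h2 h3)]
  linear_combination key'

lemma mexp_add [CharZero K] {x y : MvPowerSeries σ K}
    (hx : MvPowerSeries.constantCoeff x = 0) (hy : MvPowerSeries.constantCoeff y = 0) :
    mexp (x + y) = mexp x * mexp y := by
  classical
  ext d
  set M := wt d + 1 with hM
  rw [MvPowerSeries.coeff_mul]
  have step1 : ∑ ef ∈ Finset.HasAntidiagonal.antidiagonal d,
      MvPowerSeries.coeff ef.1 (mexp x) * MvPowerSeries.coeff ef.2 (mexp y)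
      = ∑ n ∈ Finset.range M, ∑ m ∈ Finset.range M,
          MvPowerSeries.coeff d (x ^ n * y ^ m)
            / ((Nat.factorial n : K) * (Nat.factorial m : K)) := by
    have e1 : ∀ ef ∈ Finset.HasAntidiagonal.antidiagonal d,
        MvPowerSeries.coeff ef.1 (mexp x) * MvPowerSeries.coeff ef.2 (mexp y)
        = ∑ n ∈ Finset.range M, ∑ m ∈ Finset.range M,
            (MvPowerSeries.coeff ef.1 (x ^ n) / (Nat.factorial n : K)) *
            (MvPowerSeries.coeff ef.2 (y ^ m) / (Nat.factorial m : K)) := by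
      rintro ⟨e, f⟩ hef
      dsimp only
      rw [Finset.HasAntidiagonal.mem_antidiagonal] at hef
      dsimp only at hef
      have hw : wt e + wt f = wt d := by rw [← wt_add, hef]
      rw [coeff_mexp_of_le hx e (N := M) (by omega),
        coeff_mexp_of_le hy f (N := M) (by omega), Finset.sum_mul_sum]
    rw [Finset.sum_congr rfl e1, Finset.sum_comm]
    apply Finset.sum_congr rfl
    intro n _
    rw [Finset.sum_comm]
    apply Finset.sum_congr rfl
    intro m _
    rw [MvPowerSeries.coeff_mul, Finset.sum_div]
    apply Finset.sum_congr rfl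
    rintro ⟨e, f⟩ _
    rw [div_mul_div_comm]
  rw [step1, sum_square_eq_sum_antidiagonal M _ (fun n m hnm =>
    by rw [coeff_mul_pow_eq_zero hx hy (show wt d < n + m by omega), zero_div])]
  rw [coeff_mexp]
  apply Finset.sum_congr rfl
  intro N _
  rw [Finset.Nat.sum_antidiagonal_eq_sum_range_succ_mk, add_pow, map_sum, Finset.sum_div]
  apply Finset.sum_congr rfl
  intro k hk
  rw [Finset.mem_range] at hk
  dsimp only
  rw [show ((N.choose k : ℕ) : MvPowerSeries σ K) = MvPowerSeries.C ((N.choose k : ℕ) : K)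
      from (map_natCast (MvPowerSeries.C) _).symm,
    MvPowerSeries.coeff_mul_C, mul_div_assoc, choose_div_factorial (K := K) N k (by omega),
    mul_one_div]

lemma coeff_substOne {K : Type} [Field K] {σ : Type} (a : MvPowerSeries σ K)
    (f : PowerSeries K) (d : σ →₀ ℕ) :
    MvPowerSeries.coeff d (substOne a f)
      = ∑ n ∈ Finset.range (wt d + 1),
          PowerSeries.coeff n f * MvPowerSeries.coeff d (a ^ n) := rfl

variable {K : Type} [Field K] {σ : Type}

lemma coeff_substOne_of_le {a : MvPowerSeries σ K}
    (ha : MvPowerSeries.constantCoeff a = 0) (f : PowerSeries K) (d : σ →₀ ℕ)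
    {N : ℕ} (hN : wt d < N) :
    MvPowerSeries.coeff d (substOne a f)
      = ∑ n ∈ Finset.range N, PowerSeries.coeff n f * MvPowerSeries.coeff d (a ^ n) := by
  rw [coeff_substOne]
  apply Finset.sum_subset
  · intro n hn; rw [Finset.mem_range] at *; omega
  · intro n _ hn
    rw [Finset.mem_range, not_lt] at hn
    rw [coeff_pow_eq_zero ha (by omega), mul_zero]

lemma substOne_one (a : MvPowerSeries σ K) : substOne a (1 : PowerSeries K) = 1 := by
  ext d
  rw [coeff_substOne, Finset.sum_eq_single 0]
  · simp
  · intro n _ hn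
    rw [PowerSeries.coeff_one, if_neg hn, zero_mul]
  · intro h; simp at h

lemma substOne_zero (a : MvPowerSeries σ K) : substOne a (0 : PowerSeries K) = 0 := by
  ext d
  rw [coeff_substOne]
  simp

lemma substOne_add (a : MvPowerSeries σ K) (f g : PowerSeries K) :
    substOne a (f + g) = substOne a f + substOne a g := by
  ext d
  rw [map_add, coeff_substOne, coeff_substOne, coeff_substOne, ← Finset.sum_add_distrib]
  apply Finset.sum_congr rfl
  intro n _
  rw [map_add, add_mul]

lemma substOne_sum (a : MvPowerSeries σ K) {ι : Type*} (t : Finset ι) (f : ι → PowerSeries K) :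
    substOne a (∑ i ∈ t, f i) = ∑ i ∈ t, substOne a (f i) := by
  classical
  induction t using Finset.induction with
  | empty => simp [substOne_zero]
  | insert _ _ hni ih => rw [Finset.sum_insert hni, Finset.sum_insert hni, substOne_add, ih]

lemma substOne_mul {a : MvPowerSeries σ K} (ha : MvPowerSeries.constantCoeff a = 0)
    (f g : PowerSeries K) : substOne a (f * g) = substOne a f * substOne a g := by
  classical
  ext d
  set M := wt d + 1 with hM
  rw [coeff_substOne, MvPowerSeries.coeff_mul]
  have lhs : ∑ n ∈ Finset.range M,
      PowerSeries.coeff n (f * g) * MvPowerSeries.coeff d (a ^ n)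
      = ∑ N ∈ Finset.range M, ∑ nm ∈ Finset.HasAntidiagonal.antidiagonal N,
          (PowerSeries.coeff nm.1 f * PowerSeries.coeff nm.2 g)
            * MvPowerSeries.coeff d (a ^ (nm.1 + nm.2)) := by
    apply Finset.sum_congr rfl
    intro N _
    rw [PowerSeries.coeff_mul, Finset.sum_mul]
    apply Finset.sum_congr rfl
    intro nm hnm
    rw [Finset.HasAntidiagonal.mem_antidiagonal] at hnm
    rw [hnm]
  rw [lhs, ← sum_square_eq_sum_antidiagonal M
    (fun n m => PowerSeries.coeff n f * PowerSeries.coeff m g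
      * MvPowerSeries.coeff d (a ^ (n + m)))
    (fun n m hnm => by
      rw [coeff_pow_eq_zero ha (show wt d < n + m by omega), mul_zero])]
  have rhs : ∀ ef ∈ Finset.HasAntidiagonal.antidiagonal d,
      MvPowerSeries.coeff ef.1 (substOne a f) * MvPowerSeries.coeff ef.2 (substOne a g)
      = ∑ n ∈ Finset.range M, ∑ m ∈ Finset.range M,
          (PowerSeries.coeff n f * MvPowerSeries.coeff ef.1 (a ^ n)) *
          (PowerSeries.coeff m g * MvPowerSeries.coeff ef.2 (a ^ m)) := by
    rintro ⟨e, f'⟩ hef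
    dsimp only
    rw [Finset.HasAntidiagonal.mem_antidiagonal] at hef
    dsimp only at hef
    have hw : wt e + wt f' = wt d := by rw [← wt_add, hef]
    rw [coeff_substOne_of_le ha f e (N := M) (by omega),
      coeff_substOne_of_le ha g f' (N := M) (by omega), Finset.sum_mul_sum]
  conv_rhs => rw [Finset.sum_congr rfl rhs, Finset.sum_comm]
  apply Finset.sum_congr rfl
  intro n _
  rw [Finset.sum_comm]
  apply Finset.sum_congr rfl
  intro m _
  rw [pow_add, MvPowerSeries.coeff_mul, Finset.mul_sum]
  apply Finset.sum_congr rfl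
  rintro ⟨e, f'⟩ _
  ring

lemma substOne_pow {a : MvPowerSeries σ K} (ha : MvPowerSeries.constantCoeff a = 0)
    (f : PowerSeries K) (m : ℕ) : substOne a (f ^ m) = (substOne a f) ^ m := by
  induction m with
  | zero => simpa using substOne_one a
  | succ m ih => rw [pow_succ, pow_succ, substOne_mul ha, ih]

lemma ps_cc {g : PowerSeries K} (hg : PowerSeries.constantCoeff g = 0) :
    PowerSeries.coeff 0 g = 0 := by
  rw [PowerSeries.coeff_zero_eq_constantCoeff]; exact hg

lemma ps_coeff_pow_eq_zero {g : PowerSeries K} (hg : PowerSeries.constantCoeff g = 0) :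
    ∀ {m : ℕ} {n : ℕ}, n < m → PowerSeries.coeff n (g ^ m) = 0 := by
  intro m
  induction m with
  | zero => intro n h; omega
  | succ m ih =>
    intro n h
    rw [pow_succ, PowerSeries.coeff_mul]
    apply Finset.sum_eq_zero
    rintro ⟨i, j⟩ hij
    rw [Finset.HasAntidiagonal.mem_antidiagonal] at hij
    dsimp only at hij ⊢
    by_cases hj : j = 0
    · subst hj
      rw [ps_cc hg, mul_zero]
    · rw [ih (show i < m by omega), zero_mul]

lemma coeff_pexp (g : PowerSeries K) (n : ℕ) :
    PowerSeries.coeff n (pexp g) = ∑ m ∈ Finset.range (n + 1),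
      PowerSeries.coeff n (g ^ m) / (Nat.factorial m : K) := by
  rw [pexp, PowerSeries.coeff_mk]

lemma substOne_pexp {a : MvPowerSeries σ K} (ha : MvPowerSeries.constantCoeff a = 0)
    {g : PowerSeries K} (hg : PowerSeries.constantCoeff g = 0) :
    substOne a (pexp g) = mexp (substOne a g) := by
  ext d
  set M := wt d + 1 with hM
  have hcc : MvPowerSeries.constantCoeff (substOne a g) = 0 := by
    have : MvPowerSeries.constantCoeff (substOne a g)
        = MvPowerSeries.coeff 0 (substOne a g) := rfl
    rw [this, coeff_substOne]
    have hwt0 : wt (0 : σ →₀ ℕ) = 0 := rfl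
    rw [hwt0]
    rw [Finset.sum_range_one, pow_zero]
    rw [ps_cc hg, zero_mul]
  rw [coeff_substOne, coeff_mexp]
  have step : ∀ n ∈ Finset.range M,
      PowerSeries.coeff n (pexp g) * MvPowerSeries.coeff d (a ^ n)
      = ∑ m ∈ Finset.range M,
          (PowerSeries.coeff n (g ^ m) / (Nat.factorial m : K))
            * MvPowerSeries.coeff d (a ^ n) := by
    intro n hn
    rw [coeff_pexp, Finset.sum_mul]
    apply Finset.sum_subset
    · intro m hm
      rw [Finset.mem_range] at *
      omega
    · intro m _ hm
      rw [Finset.mem_range, not_lt] at hm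
      rw [ps_coeff_pow_eq_zero hg (by omega), zero_div, zero_mul]
  rw [Finset.sum_congr rfl step, Finset.sum_comm]
  apply Finset.sum_congr rfl
  intro m _
  have : ∑ n ∈ Finset.range M,
      PowerSeries.coeff n (g ^ m) / (Nat.factorial m : K) * MvPowerSeries.coeff d (a ^ n)
      = (∑ n ∈ Finset.range M,
          PowerSeries.coeff n (g ^ m) * MvPowerSeries.coeff d (a ^ n))
        / (Nat.factorial m : K) := by
    rw [Finset.sum_div]
    apply Finset.sum_congr rfl
    intro n _
    ring
  rw [this, ← coeff_substOne_of_le ha (g ^ m) d (by omega), substOne_pow ha]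

lemma substOne_monomial {a : MvPowerSeries σ K} (ha : MvPowerSeries.constantCoeff a = 0)
    (n : ℕ) (c : K) : substOne a (PowerSeries.monomial n c) = c • a ^ n := by
  ext d
  rw [coeff_substOne]
  by_cases h : n < wt d + 1
  · rw [Finset.sum_eq_single n]
    · rw [PowerSeries.coeff_monomial, if_pos rfl, MvPowerSeries.coeff_smul]
    · intro m _ hm
      rw [PowerSeries.coeff_monomial, if_neg hm, zero_mul]
    · intro hn; exact absurd (Finset.mem_range.mpr h) hn
  · rw [MvPowerSeries.coeff_smul, coeff_pow_eq_zero ha (show wt d < n by omega), mul_zero]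
    apply Finset.sum_eq_zero
    intro m hm
    rw [Finset.mem_range] at hm
    rw [PowerSeries.coeff_monomial, if_neg (by omega), zero_mul]

/-- `G_{s,p}(a) = E_{s,p}(p·a) / E_{s-1,p}(a)`, where `p·a` is multiplication by `p` in the
Witt ring and `E_{s-1,p}` is applied to (the first `s-1` components of) `a`. -/
noncomputable def GW (p s : ℕ) {K : Type} [Field K] (ζ : K) {σ : Type}
    (a : WittVector p (MvPowerSeries σ K)) [Fact p.Prime] : MvPowerSeries σ K :=
  EW p s ζ s (p • a) * (EW p s ζ (s - 1) a)⁻¹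

lemma substOne_Esingle {p s : ℕ} (hp : p ≠ 0) (ζ : K) (j : ℕ)
    {a : MvPowerSeries σ K} (ha : MvPowerSeries.constantCoeff a = 0) :
    substOne a (Esingle p s ζ j)
      = mexp (∑ k ∈ Finset.range j,
          ((ζ ^ p ^ (s - j + k) - 1) / ((p : K) ^ k)) • a ^ (p ^ k)) := by
  rw [Esingle, substOne_pexp ha, substOne_sum]
  · apply congrArg
    apply Finset.sum_congr rfl
    intro k _
    rw [substOne_monomial ha]
  · rw [map_sum]
    apply Finset.sum_eq_zero
    intro k _
    rw [← PowerSeries.coeff_zero_eq_constantCoeff_apply, PowerSeries.coeff_monomial,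
      if_neg (by positivity)]

lemma constantCoeff_smul_pow {c : K} {a : MvPowerSeries σ K}
    (ha : MvPowerSeries.constantCoeff a = 0) {n : ℕ} (hn : n ≠ 0) :
    MvPowerSeries.constantCoeff (c • a ^ n) = 0 := by
  have h1 : MvPowerSeries.constantCoeff (c • a ^ n)
      = MvPowerSeries.coeff 0 (c • a ^ n) := rfl
  rw [h1, MvPowerSeries.coeff_smul]
  have : MvPowerSeries.coeff 0 (a ^ n) = MvPowerSeries.constantCoeff (a ^ n) := rfl
  rw [this, map_pow, ha, zero_pow hn, mul_zero]

lemma prod_mexp [CharZero K] (n : ℕ) (F : ℕ → MvPowerSeries σ K)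
    (hF : ∀ i, MvPowerSeries.constantCoeff (F i) = 0) :
    ∏ i ∈ Finset.range n, mexp (F i) = mexp (∑ i ∈ Finset.range n, F i) := by
  induction n with
  | zero => simp [mexp_zero]
  | succ n ih =>
    rw [Finset.prod_range_succ, Finset.sum_range_succ, ih,
      mexp_add (by rw [map_sum]; exact Finset.sum_eq_zero fun i _ => hF i) (hF n)]

/-- all coefficients have zero constant term -/
def Pz {p : ℕ} [Fact p.Prime] (a : WittVector p (MvPowerSeries σ K)) : Prop :=
  ∀ i, MvPowerSeries.constantCoeff (a.coeff i) = 0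

lemma Pz_iff {p : ℕ} [Fact p.Prime] (a : WittVector p (MvPowerSeries σ K)) :
    Pz a ↔ WittVector.map MvPowerSeries.constantCoeff a = 0 := by
  constructor
  · intro h
    apply WittVector.ext
    intro i
    rw [WittVector.map_coeff, WittVector.zero_coeff]
    exact h i
  · intro h i
    have := congrArg (fun x => WittVector.coeff x i) h
    simpa [WittVector.map_coeff] using this

lemma Pz_add {p : ℕ} [Fact p.Prime] {a b : WittVector p (MvPowerSeries σ K)}
    (ha : Pz a) (hb : Pz b) : Pz (a + b) := by
  rw [Pz_iff] at *
  rw [map_add, ha, hb, add_zero]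

lemma Pz_nsmul {p : ℕ} [Fact p.Prime] {a : WittVector p (MvPowerSeries σ K)}
    (ha : Pz a) (m : ℕ) : Pz (m • a) := by
  rw [Pz_iff] at *
  rw [map_nsmul, ha, smul_zero]

/-- The exponent sum in `mexp`-form of `EW`. -/
noncomputable def TW (p s : ℕ) (ζ : K) (n : ℕ) {σ : Type} [Fact p.Prime]
    (a : WittVector p (MvPowerSeries σ K)) : MvPowerSeries σ K :=
  ∑ i ∈ Finset.range n, ∑ k ∈ Finset.range (n - i),
    ((ζ ^ p ^ (s - (n - i) + k) - 1) / ((p : K) ^ k)) • (a.coeff i) ^ (p ^ k)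

lemma constantCoeff_TW {p s : ℕ} (ζ : K) (n : ℕ) [Fact p.Prime]
    {a : WittVector p (MvPowerSeries σ K)} (ha : Pz a) :
    MvPowerSeries.constantCoeff (TW p s ζ n a) = 0 := by
  have hp : p ≠ 0 := (Fact.out : p.Prime).ne_zero
  rw [TW, map_sum]
  apply Finset.sum_eq_zero
  intro i _
  rw [map_sum]
  apply Finset.sum_eq_zero
  intro k _
  exact constantCoeff_smul_pow (ha i) (pow_ne_zero _ hp)

lemma EW_eq_mexp {p s : ℕ} (ζ : K) (n : ℕ) [Fact p.Prime] [CharZero K]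
    {a : WittVector p (MvPowerSeries σ K)} (ha : Pz a) :
    EW p s ζ n a = mexp (TW p s ζ n a) := by
  have hp : p ≠ 0 := (Fact.out : p.Prime).ne_zero
  rw [EW, TW]
  rw [show ∏ i ∈ Finset.range n, substOne (a.coeff i) (Esingle p s ζ (n - i))
      = ∏ i ∈ Finset.range n, mexp (∑ k ∈ Finset.range (n - i),
          ((ζ ^ p ^ (s - (n - i) + k) - 1) / ((p : K) ^ k)) • (a.coeff i) ^ (p ^ k)) from
    Finset.prod_congr rfl fun i _ => substOne_Esingle hp ζ (n - i) (ha i)]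
  exact prod_mexp n _ fun i => by
    rw [map_sum]
    exact Finset.sum_eq_zero fun k _ => constantCoeff_smul_pow (ha i) (pow_ne_zero _ hp)

lemma TW_eq_ghost {p s : ℕ} (ζ : K) {n : ℕ} (hn : n ≤ s) [Fact p.Prime] [CharZero K]
    (a : WittVector p (MvPowerSeries σ K)) :
    TW p s ζ n a = ∑ m ∈ Finset.range n,
      ((ζ ^ p ^ (s - n + m) - 1) / ((p : K) ^ m)) • (WittVector.ghostComponent m a) := by
  have hp : p ≠ 0 := (Fact.out : p.Prime).ne_zero
  have hpK : (p : K) ≠ 0 := Nat.cast_ne_zero.mpr hp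
  have rhs : ∀ m, ((ζ ^ p ^ (s - n + m) - 1) / ((p : K) ^ m)) •
        (WittVector.ghostComponent m a : MvPowerSeries σ K)
      = ∑ i ∈ Finset.range (m + 1),
          ((ζ ^ p ^ (s - n + m) - 1) / ((p : K) ^ (m - i))) • (a.coeff i) ^ (p ^ (m - i)) := by
    intro m
    rw [WittVector.ghostComponent_apply, aeval_wittPolynomial, Finset.smul_sum]
    apply Finset.sum_congr rfl
    intro i hi
    rw [Finset.mem_range] at hi
    have h1 : ((p : MvPowerSeries σ K)) ^ i = ((p : K) ^ i) • (1 : MvPowerSeries σ K) := by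
      rw [Algebra.smul_def, mul_one, map_pow, map_natCast]
    rw [h1, smul_mul_assoc, one_mul, smul_smul]
    congr 1
    rw [div_mul_eq_mul_div, ← pow_sub_mul_pow (p : K) (show i ≤ m by omega)]
    field_simp
  rw [Finset.sum_congr rfl fun m _ => rhs m, TW]
  -- reindex (i, k) ↦ (i + k, i)
  rw [Finset.sum_sigma', Finset.sum_sigma']
  apply Finset.sum_nbij' (i := fun x => (⟨x.1 + x.2, x.1⟩ : Σ _ : ℕ, ℕ))
    (j := fun x => (⟨x.2, x.1 - x.2⟩ : Σ _ : ℕ, ℕ))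
  · rintro ⟨i, k⟩ h
    simp only [Finset.mem_sigma, Finset.mem_range] at h ⊢
    omega
  · rintro ⟨m, i⟩ h
    simp only [Finset.mem_sigma, Finset.mem_range] at h ⊢
    omega
  · rintro ⟨i, k⟩ h
    simp only [Finset.mem_sigma, Finset.mem_range] at h
    simp only
    congr 1 <;> omega
  · rintro ⟨m, i⟩ h
    simp only [Finset.mem_sigma, Finset.mem_range] at h
    simp only
    congr 1 <;> omega
  · rintro ⟨i, k⟩ h
    simp only [Finset.mem_sigma, Finset.mem_range] at h
    simp only
    have e1 : s - (n - i) + k = s - n + (i + k) := by omega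
    have e2 : i + k - i = k := by omega
    rw [e1, e2]

lemma EW_add {p s : ℕ} (ζ : K) {n : ℕ} (hn : n ≤ s) [Fact p.Prime] [CharZero K]
    {a b : WittVector p (MvPowerSeries σ K)} (ha : Pz a) (hb : Pz b) :
    EW p s ζ n (a + b) = EW p s ζ n a * EW p s ζ n b := by
  rw [EW_eq_mexp ζ n (Pz_add ha hb), EW_eq_mexp ζ n ha, EW_eq_mexp ζ n hb,
    ← mexp_add (constantCoeff_TW ζ n ha) (constantCoeff_TW ζ n hb)]
  rw [TW_eq_ghost ζ hn, TW_eq_ghost ζ hn, TW_eq_ghost ζ hn, ← Finset.sum_add_distrib]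
  apply congrArg
  apply Finset.sum_congr rfl
  intro m _
  rw [map_add, smul_add]

/-- `G_{s,p}(a) · G_{s,p}(b) = G_{s,p}(a + b)` for Witt vector addition, as an identity of
formal power series in the (independent variable) entries of `a` and `b`. -/
theorem stmt_7 (p s : ℕ) [Fact p.Prime] (hs : 2 ≤ s) (K : Type) [Field K] [CharZero K]
    (ζ : K) (hζ : IsPrimitiveRoot ζ (p ^ s)) :
    ∀ a b : WittVector p (MvPowerSeries (Fin 2 × ℕ) K),
      a = WittVector.mk p (fun i => MvPowerSeries.X (0, i)) →
      b = WittVector.mk p (fun i => MvPowerSeries.X (1, i)) →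
      GW p s ζ a * GW p s ζ b = GW p s ζ (a + b) := by
  intro a b ha hb
  have Pa : Pz a := by
    subst ha
    intro i
    exact MvPowerSeries.constantCoeff_X _
  have Pb : Pz b := by
    subst hb
    intro i
    exact MvPowerSeries.constantCoeff_X _
  rw [GW, GW, GW, smul_add,
    EW_add ζ le_rfl (Pz_nsmul Pa p) (Pz_nsmul Pb p),
    EW_add ζ (show s - 1 ≤ s by omega) Pa Pb, MvPowerSeries.mul_inv_rev]
  ring
end
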